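/- Let F be a field, let k ≥ 2 and n ≥ 2k−1 be integers, and let x_1, …, x_k ∈ F with x_k ≠ 0. Let T be the (k−1)×(k−1) matrix over F with (T)_{p,1} = −x_{k−p}/x_k for 1 ≤ p ≤ k−1, (T)_{p,p+1} = 1 for 1 ≤ p ≤ k−2, and all other entries 0. For a (k−1)×(k−1) matrix Y over F and an integer s ≥ 2k−1, let N_s(Y) denote the s×s matrix whose (p,q) entry equals x_{k+q−p} whenever 0 ≤ p−q ≤ k−1, equals Y_{p, q−s+k−1} whenever 1 ≤ p ≤ k−1 and s−k+2 ≤ q ≤ s, and equals 0 otherwise. Then for every s with 2k−1 ≤ s ≤ n and every (k−1)×(k−1) matrix Y, det N_s(Y) = x_k · det N_{s−1}(T Y). -/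

import Mathlib

open Matrix

/-- The `s × s` matrix `N_s(Y)`: banded lower-triangular Toeplitz part with entries
`x_{k+q-p}` on the band `0 ≤ p - q ≤ k-1`, with the `(k-1) × (k-1)` matrix `Y` placed
in the upper-right corner (rows `1 ≤ p ≤ k-1`, columns `s-k+2 ≤ q ≤ s`, where the
`(p,q)` entry of `N_s(Y)` is `Y_{p, q-s+k-1}`), and zeros elsewhere.
(All indices in this description are 1-based; `Fin` indices below are 0-based.) -/
def Nmat {F : Type*} [Field F] (k : ℕ) (x : ℕ → F) (s : ℕ)
    (Y : Matrix (Fin (k - 1)) (Fin (k - 1)) F) : Matrix (Fin s) (Fin s) F :=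
  fun p q =>
    if q.val ≤ p.val ∧ p.val - q.val ≤ k - 1 then x (k - (p.val - q.val))
    else if h : p.val < k - 1 ∧ s - k + 1 ≤ q.val ∧ q.val - (s - k + 1) < k - 1 then
      Y ⟨p.val, h.1⟩ ⟨q.val - (s - k + 1), h.2.2⟩
    else 0

/-- The `(k-1) × (k-1)` elimination matrix `T`: `T_{p,1} = -x_{k-p}/x_k` for
`1 ≤ p ≤ k-1`, `T_{p,p+1} = 1` for `1 ≤ p ≤ k-2`, all other entries `0`
(1-based description; `Fin` indices below are 0-based). -/
noncomputable def Tmat {F : Type*} [Field F] (k : ℕ) (x : ℕ → F) :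
    Matrix (Fin (k - 1)) (Fin (k - 1)) F :=
  fun p q =>
    if q.val = 0 then -x (k - 1 - p.val) / x k
    else if q.val = p.val + 1 then 1 else 0

lemma TY_apply {F : Type*} [Field F] (k : ℕ) (hk : 2 ≤ k) (x : ℕ → F)
    (Y : Matrix (Fin (k - 1)) (Fin (k - 1)) F) (av : ℕ) (ha : av < k - 1) (b : Fin (k-1)) :
    (Tmat k x * Y) ⟨av, ha⟩ b = (-x (k - 1 - av) / x k) * Y ⟨0, by omega⟩ b +
      (if h : av + 1 < k - 1 then Y ⟨av + 1, h⟩ b else 0) := by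
  rw [Matrix.mul_apply]
  have key : ∀ j : Fin (k-1), Tmat k x ⟨av, ha⟩ j * Y j b =
      (if j = (⟨0, by omega⟩ : Fin (k-1)) then (-x (k - 1 - av) / x k) * Y ⟨0, by omega⟩ b else 0)
      + (if h : av + 1 < k - 1 then (if j = (⟨av+1, h⟩ : Fin (k-1)) then Y ⟨av+1, h⟩ b else 0) else 0) := by
    intro j
    unfold Tmat
    rcases j with ⟨jv, hj⟩
    simp only [Fin.mk.injEq]
    by_cases h0 : jv = 0
    · subst h0
      rw [if_pos rfl, if_pos rfl]
      split
      · rw [if_neg (show ¬(0 = av + 1) by omega)]; ring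
      · ring
    · rw [if_neg h0, if_neg h0]
      by_cases h1 : jv = av + 1
      · subst h1
        rw [if_pos rfl, dif_pos hj, if_pos rfl]
        ring
      · rw [if_neg h1]
        split <;> ring
  rw [Finset.sum_congr rfl (fun j _ => key j), Finset.sum_add_distrib,
    Finset.sum_ite_eq' Finset.univ, if_pos (Finset.mem_univ _)]
  congr 1
  split
  · rw [Finset.sum_ite_eq' Finset.univ, if_pos (Finset.mem_univ _)]
  · simp


/-- One step of Gaussian elimination: for `2k-1 ≤ s ≤ n` and any
`(k-1) × (k-1)` matrix `Y`, `det N_s(Y) = x_k * det N_{s-1}(T Y)`. -/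
theorem stmt_1 {F : Type*} [Field F] (k n : ℕ) (hk : 2 ≤ k) (hn : 2 * k - 1 ≤ n)
    (x : ℕ → F) (hx : x k ≠ 0)
    (s : ℕ) (hs1 : 2 * k - 1 ≤ s) (hs2 : s ≤ n)
    (Y : Matrix (Fin (k - 1)) (Fin (k - 1)) F) :
    (Nmat k x s Y).det = x k * (Nmat k x (s - 1) (Tmat k x * Y)).det := by
  obtain ⟨m, rfl⟩ : ∃ m, s = m + 1 := ⟨s - 1, by omega⟩
  have hm : 2 * k - 2 ≤ m := by omega
  set N := Nmat k x (m+1) Y with hN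
  set C : Matrix (Fin (m+1)) (Fin (m+1)) F := fun p q =>
    if q.val = 0 ∧ p ≠ 0 ∧ p.val < k then -x (k - p.val) / x k else 0 with hC
  set E : Matrix (Fin (m+1)) (Fin (m+1)) F := 1 + C with hE
  have hEdet : E.det = 1 := by
    have htri : E.BlockTriangular OrderDual.toDual := by
      intro i j hij
      have hv : i.val < j.val := hij
      rw [hE, Matrix.add_apply, Matrix.one_apply]
      simp only [hC]
      rw [if_neg (by rintro rfl; omega), if_neg (by rintro ⟨h1, _, _⟩; omega)]
      ring
    rw [Matrix.det_of_lowerTriangular E htri]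
    apply Finset.prod_eq_one
    intro i _
    have hCii : C i i = 0 := by
      simp only [hC]
      rw [if_neg]
      rintro ⟨h1, h2, h3⟩
      exact h2 (Fin.ext (by simpa using h1))
    simp [hE, Matrix.add_apply, hCii]
  have hCN : ∀ p q, (C * N) p q = C p 0 * N 0 q := by
    intro p q
    rw [Matrix.mul_apply]
    rw [Finset.sum_eq_single 0]
    · intro b _ hb
      have hb' : C p b = 0 := by
        simp only [hC]
        rw [if_neg]
        rintro ⟨h1, _⟩
        exact hb (Fin.ext (by simpa using h1))
      rw [hb', zero_mul]
    · intro h; exact absurd (Finset.mem_univ _) h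
  have hEN : ∀ p q, (E * N) p q = N p q + C p 0 * N 0 q := by
    intro p q
    rw [hE, Matrix.add_mul, Matrix.one_mul, Matrix.add_apply, hCN]
  have hN00 : N 0 0 = x k := by
    simp only [hN, Nmat, Fin.val_zero, Nat.sub_zero]
    exact if_pos (show 0 ≤ 0 ∧ 0 ≤ k - 1 by omega)
  -- first column of E * N
  have hcol : ∀ i : Fin (m+1), (E * N) i 0 = if i = 0 then x k else 0 := by
    intro i
    rw [hEN]
    by_cases hi : i = 0
    · subst hi
      rw [if_pos rfl, hN00]
      have hC00 : C 0 0 = 0 := by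
        simp only [hC]
        rw [if_neg (by rintro ⟨_, h2, _⟩; exact h2 rfl)]
      rw [hC00]
      ring
    · rw [if_neg hi]
      by_cases hik : i.val < k
      · have hNi0 : N i 0 = x (k - i.val) := by
          simp only [hN, Nmat, Fin.val_zero, Nat.sub_zero]
          exact if_pos (show 0 ≤ i.val ∧ i.val ≤ k - 1 by omega)
        have hCi0 : C i 0 = -x (k - i.val) / x k := by
          simp only [hC, Fin.val_zero]
          rw [if_pos ⟨trivial, hi, hik⟩]
        rw [hNi0, hCi0, hN00]
        field_simp
        ring
      · have hNi0 : N i 0 = 0 := by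
          simp only [hN, Nmat, Fin.val_zero, Nat.sub_zero]
          exact (if_neg (show ¬(0 ≤ i.val ∧ i.val ≤ k - 1) by omega)).trans
            (dif_neg (show ¬(i.val < k - 1 ∧ m + 1 - k + 1 ≤ 0 ∧ 0 - (m + 1 - k + 1) < k - 1) by omega))
        have hCi0 : C i 0 = 0 := by
          simp only [hC]
          rw [if_neg (by rintro ⟨_, _, h3⟩; exact hik h3)]
        rw [hNi0, hCi0]; ring
  -- submatrix equals the smaller Nmat
  have hsub : (E * N).submatrix Fin.succ Fin.succ = Nmat k x m (Tmat k x * Y) := by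
    funext p q
    rcases p with ⟨P, hP⟩
    rcases q with ⟨Q, hQ⟩
    simp only [Matrix.submatrix_apply]
    rw [hEN]
    have hCs : C (Fin.succ ⟨P, hP⟩) 0 =
        if P + 1 < k then -x (k - (P+1)) / x k else 0 := by
      simp only [hC, Fin.val_zero, Fin.val_succ]
      by_cases hPk : P + 1 < k
      · rw [if_pos hPk, if_pos ⟨trivial, Fin.succ_ne_zero _, hPk⟩]
      · rw [if_neg hPk, if_neg (by rintro ⟨_, _, h3⟩; exact hPk h3)]
    have hN0 : N 0 (Fin.succ ⟨Q, hQ⟩) =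
        if h : m - k + 1 ≤ Q ∧ Q - (m - k + 1) < k - 1 then
          Y ⟨0, by omega⟩ ⟨Q - (m - k + 1), h.2⟩ else 0 := by
      simp only [hN, Nmat, Fin.val_succ, Fin.val_zero]
      by_cases hq : m - k + 1 ≤ Q ∧ Q - (m - k + 1) < k - 1
      · refine (if_neg (show ¬(Q + 1 ≤ 0 ∧ 0 - (Q+1) ≤ k - 1) by omega)).trans
          ((dif_pos (show 0 < k - 1 ∧ m + 1 - k + 1 ≤ Q + 1 ∧ Q + 1 - (m + 1 - k + 1) < k - 1 by omega)).trans ?_)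
        rw [dif_pos hq]
        congr 1
        exact Fin.ext (show Q + 1 - (m + 1 - k + 1) = Q - (m - k + 1) by omega)
      · refine (if_neg (show ¬(Q + 1 ≤ 0 ∧ 0 - (Q+1) ≤ k - 1) by omega)).trans
          ((dif_neg (show ¬(0 < k - 1 ∧ m + 1 - k + 1 ≤ Q + 1 ∧ Q + 1 - (m + 1 - k + 1) < k - 1) by omega)).trans ?_)
        rw [dif_neg hq]
    have hNs : N (Fin.succ ⟨P, hP⟩) (Fin.succ ⟨Q, hQ⟩) =
        if Q ≤ P ∧ P - Q ≤ k - 1 then x (k - (P - Q))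
        else if h : P + 1 < k - 1 ∧ m - k + 1 ≤ Q ∧ Q - (m - k + 1) < k - 1 then
          Y ⟨P + 1, h.1⟩ ⟨Q - (m - k + 1), h.2.2⟩ else 0 := by
      simp only [hN, Nmat, Fin.val_succ]
      by_cases hb : Q ≤ P ∧ P - Q ≤ k - 1
      · rw [if_pos (show Q + 1 ≤ P + 1 ∧ P + 1 - (Q + 1) ≤ k - 1 by omega), if_pos hb]
        congr 1
        omega
      · rw [if_neg (show ¬(Q + 1 ≤ P + 1 ∧ P + 1 - (Q + 1) ≤ k - 1) by omega), if_neg hb]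
        by_cases hc : P + 1 < k - 1 ∧ m - k + 1 ≤ Q ∧ Q - (m - k + 1) < k - 1
        · rw [dif_pos (show P + 1 < k - 1 ∧ m + 1 - k + 1 ≤ Q + 1 ∧ Q + 1 - (m + 1 - k + 1) < k - 1 by omega),
            dif_pos hc]
          congr 1
          exact Fin.ext (show Q + 1 - (m + 1 - k + 1) = Q - (m - k + 1) by omega)
        · rw [dif_neg (show ¬(P + 1 < k - 1 ∧ m + 1 - k + 1 ≤ Q + 1 ∧ Q + 1 - (m + 1 - k + 1) < k - 1) by omega),
            dif_neg hc]
    rw [hCs, hN0, hNs]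
    simp only [Nmat]
    by_cases hb : Q ≤ P ∧ P - Q ≤ k - 1
    · -- band case
      rw [if_pos hb, if_pos hb]
      by_cases hPk : P + 1 < k
      · rw [if_pos hPk, dif_neg (show ¬(m - k + 1 ≤ Q ∧ Q - (m - k + 1) < k - 1) by omega)]
        ring
      · rw [if_neg hPk]; ring
    · rw [if_neg hb, if_neg hb]
      by_cases hc : P < k - 1 ∧ m - k + 1 ≤ Q ∧ Q - (m - k + 1) < k - 1
      · -- corner case
        rw [if_pos (show P + 1 < k by omega), dif_pos hc,
          TY_apply k hk x Y P hc.1,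
          dif_pos (show m - k + 1 ≤ Q ∧ Q - (m - k + 1) < k - 1 from ⟨hc.2.1, hc.2.2⟩),
          show k - (P + 1) = k - 1 - P by omega]
        by_cases h1 : P + 1 < k - 1
        · rw [dif_pos (show P + 1 < k - 1 ∧ m - k + 1 ≤ Q ∧ Q - (m - k + 1) < k - 1 from
              ⟨h1, hc.2.1, hc.2.2⟩), dif_pos h1]
          ring
        · rw [dif_neg (show ¬(P + 1 < k - 1 ∧ m - k + 1 ≤ Q ∧ Q - (m - k + 1) < k - 1) from
              fun h => h1 h.1), dif_neg h1]
          ring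
      · -- zero case
        rw [dif_neg hc]
        by_cases hq : m - k + 1 ≤ Q ∧ Q - (m - k + 1) < k - 1
        · rw [dif_pos hq,
            dif_neg (show ¬(P + 1 < k - 1 ∧ m - k + 1 ≤ Q ∧ Q - (m - k + 1) < k - 1) by omega),
            if_neg (show ¬(P + 1 < k) by omega)]
          ring
        · rw [dif_neg hq,
            dif_neg (show ¬(P + 1 < k - 1 ∧ m - k + 1 ≤ Q ∧ Q - (m - k + 1) < k - 1) by omega)]
          split <;> ring
  -- put it together
  have hdet : (E * N).det = N.det := by
    rw [Matrix.det_mul, hEdet, one_mul]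
  rw [← hdet, Matrix.det_succ_column_zero]
  rw [Finset.sum_eq_single 0]
  · rw [hcol 0, if_pos rfl]
    simp only [Fin.val_zero, pow_zero, one_mul, Fin.succAbove_zero]
    rw [hsub]
    rfl
  · intro b _ hb
    rw [hcol b, if_neg hb]
    ring
  · intro h; exact absurd (Finset.mem_univ _) h
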